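/- Let a, T > 0, φ : ℝ → (-a,a) a homeomorphism with φ(0)=0, f : [0,T]×ℝ×ℝ → ℝ continuous with |f(t,x,y)| ≤ c < a/(2T) for all (t,x,y) and some constant c. Suppose u ∈ C¹([0,T]) with φ∘u' continuously differentiable solves (φ(u'))' = λ f(t,u,u'), u(0)=u(T)=u'(T), for some λ ∈ [0,1], and that φ(u'(t)) = λ K(N_f(u))(t) - Q_φ(λ K(N_f(u))) where K(v)(t) = -∫ₜᵀ v(s)ds and Q_φ(h) lies in the range of h. Then ‖φ∘u'‖_∞ ≤ 2cT < a and ‖u'‖_∞ ≤ L, where L = max{|φ⁻¹(2cT)|, |φ⁻¹(-2cT)|}. -/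

import Mathlib

open MeasureTheory intervalIntegral Set

theorem stmt_12 (a T : ℝ) (ha : 0 < a) (hT : 0 < T)
    (φ ψ : ℝ → ℝ) (hφc : Continuous φ) (hψc : Continuous ψ)
    (hmem : ∀ x, φ x ∈ Set.Ioo (-a) a)
    (hinv1 : ∀ x, ψ (φ x) = x)
    (hinv2 : ∀ y ∈ Set.Ioo (-a) a, φ (ψ y) = y)
    (hφ0 : φ 0 = 0)
    (f : ℝ → ℝ → ℝ → ℝ)
    (hf : Continuous fun p : ℝ × ℝ × ℝ => f p.1 p.2.1 p.2.2)
    (c : ℝ) (hc : c < a / (2 * T))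
    (hfb : ∀ t ∈ Set.Icc (0:ℝ) T, ∀ x y : ℝ, |f t x y| ≤ c)
    (lam : ℝ) (hlam : lam ∈ Set.Icc (0:ℝ) 1)
    (u : ℝ → ℝ) (hu : ContDiff ℝ 1 u)
    (heq : ∀ t ∈ Set.Icc (0:ℝ) T,
      HasDerivAt (fun s => φ (deriv u s)) (lam * f t (u t) (deriv u t)) t)
    (hbc1 : u 0 = u T) (hbc2 : u T = deriv u T)
    -- the representation φ(u'(t)) = λ K(N_f(u))(t) - Q_φ(λ K(N_f(u)))
    (Q₀ : ℝ)
    (hQ₀mem : Q₀ ∈ (fun t => lam * (-(∫ s in t..T, f s (u s) (deriv u s)))) ''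
      Set.Icc (0:ℝ) T)
    (hrep : ∀ t ∈ Set.Icc (0:ℝ) T,
      φ (deriv u t) = lam * (-(∫ s in t..T, f s (u s) (deriv u s))) - Q₀) :
    (∀ t ∈ Set.Icc (0:ℝ) T, |φ (deriv u t)| ≤ 2 * c * T) ∧
    2 * c * T < a ∧
    (∀ t ∈ Set.Icc (0:ℝ) T,
      |deriv u t| ≤ max |ψ (2 * c * T)| |ψ (-(2 * c * T))|) := by
  have hc0 : 0 ≤ c := le_trans (abs_nonneg _) (hfb 0 ⟨le_refl 0, hT.le⟩ 0 0)
  have h2cT : 2 * c * T < a := by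
    have := (lt_div_iff₀ (by positivity : (0:ℝ) < 2 * T)).mp hc
    nlinarith
  -- bound on the K values
  have hK : ∀ t ∈ Set.Icc (0:ℝ) T,
      |lam * (-(∫ s in t..T, f s (u s) (deriv u s)))| ≤ c * T := by
    intro t ht
    have hint : ‖∫ s in t..T, f s (u s) (deriv u s)‖ ≤ c * |T - t| := by
      apply intervalIntegral.norm_integral_le_of_norm_le_const
      intro x hx
      rw [Set.uIoc_of_le ht.2] at hx
      exact hfb x ⟨le_of_lt (lt_of_le_of_lt ht.1 hx.1), hx.2⟩ _ _
    have hTt : |T - t| ≤ T := by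
      rw [abs_of_nonneg (by linarith [ht.2])]; linarith [ht.1]
    have hlam' : |lam| ≤ 1 := abs_le.mpr ⟨by linarith [hlam.1], hlam.2⟩
    rw [abs_mul, abs_neg]
    calc |lam| * |∫ s in t..T, f s (u s) (deriv u s)|
        ≤ 1 * (c * T) := by
          apply mul_le_mul hlam' _ (abs_nonneg _) zero_le_one
          exact hint.trans (by nlinarith)
      _ = c * T := one_mul _
  have hQ : |Q₀| ≤ c * T := by
    obtain ⟨t₀, ht₀, hQe⟩ := hQ₀mem
    rw [← hQe]; exact hK t₀ ht₀
  have part1 : ∀ t ∈ Set.Icc (0:ℝ) T, |φ (deriv u t)| ≤ 2 * c * T := by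
    intro t ht
    rw [hrep t ht, sub_eq_add_neg]
    calc |lam * (-(∫ s in t..T, f s (u s) (deriv u s))) + -Q₀|
        ≤ |lam * (-(∫ s in t..T, f s (u s) (deriv u s)))| + |(-Q₀)| := abs_add_le _ _
      _ ≤ c * T + c * T := by rw [abs_neg]; exact add_le_add (hK t ht) hQ
      _ = 2 * c * T := by ring
  refine ⟨part1, h2cT, ?_⟩
  -- part 3
  have hinj : Function.Injective φ := fun x y h => by
    rw [← hinv1 x, ← hinv1 y, h]
  have h2cT0 : 0 ≤ 2 * c * T := by positivity
  have hmemp : (2 * c * T) ∈ Set.Ioo (-a) a := ⟨by linarith, h2cT⟩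
  have hmemn : (-(2 * c * T)) ∈ Set.Ioo (-a) a := ⟨by linarith, by linarith⟩
  intro t ht
  have hb := part1 t ht
  have hb' := abs_le.mp hb
  have key : deriv u t = ψ (φ (deriv u t)) := (hinv1 _).symm
  rcases hφc.strictMono_of_inj hinj with hm | hm
  · -- strict mono: ψ monotone on values in range
    have h1 : ψ (φ (deriv u t)) ≤ ψ (2 * c * T) := by
      have : φ (ψ (φ (deriv u t))) ≤ φ (ψ (2 * c * T)) := by
        rw [hinv1, hinv2 _ hmemp]; exact hb'.2
      exact hm.le_iff_le.mp this
    have h2 : ψ (-(2 * c * T)) ≤ ψ (φ (deriv u t)) := by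
      have : φ (ψ (-(2 * c * T))) ≤ φ (ψ (φ (deriv u t))) := by
        rw [hinv1, hinv2 _ hmemn]; exact hb'.1
      exact hm.le_iff_le.mp this
    rw [key]
    refine abs_le.mpr ⟨?_, ?_⟩
    · exact le_trans (neg_le_neg (le_max_right _ _)) (le_trans (neg_abs_le _) h2)
    · exact le_trans h1 (le_trans (le_abs_self _) (le_max_left _ _))
  · -- strict anti
    have h1 : ψ (φ (deriv u t)) ≤ ψ (-(2 * c * T)) := by
      have : φ (ψ (-(2 * c * T))) ≤ φ (ψ (φ (deriv u t))) := by
        rw [hinv1, hinv2 _ hmemn]; exact hb'.1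
      exact hm.le_iff_ge.mp this
    have h2 : ψ (2 * c * T) ≤ ψ (φ (deriv u t)) := by
      have : φ (ψ (φ (deriv u t))) ≤ φ (ψ (2 * c * T)) := by
        rw [hinv1, hinv2 _ hmemp]; exact hb'.2
      exact hm.le_iff_ge.mp this
    rw [key]
    refine abs_le.mpr ⟨?_, ?_⟩
    · exact le_trans (neg_le_neg (le_max_left _ _)) (le_trans (neg_abs_le _) h2)
    · exact le_trans h1 (le_trans (le_abs_self _) (le_max_right _ _))
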